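/- For all r ∈ [0,1) and θ ∈ ℝ: (1 + r² - 2r·cos θ)^{-1/2} = ∑_{n=0}^{∞} ( ∑_{q=0}^{n} F̃_{q,n} · cos((n - 2q)·θ) ) · r^n, the outer series converging absolutely. -/

import Mathlib

noncomputable section

/-- the Legendre polynomial P_n(ξ) = ∑_{k=0}^{⌊n/2⌋} p_{n,k} ξ^{n-2k} -/
def legP (n : ℕ) (ξ : ℝ) : ℝ :=
  ∑ k ∈ Finset.range (n / 2 + 1),
    ((-1 : ℝ) ^ k / 2 ^ n) * (Nat.factorial (2 * n - 2 * k) : ℝ) /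
      ((Nat.factorial k : ℝ) * (Nat.factorial (n - k) : ℝ) * (Nat.factorial (n - 2 * k) : ℝ)) *
      ξ ^ (n - 2 * k)

/-- F̃_{q,n} = (2q)!(2n-2q)! / (2^{2n} (q!)² ((n-q)!)²) -/
def Ftil (q n : ℕ) : ℝ :=
  ((Nat.factorial (2 * q) : ℝ) * (Nat.factorial (2 * n - 2 * q) : ℝ)) /
    (2 ^ (2 * n) * (Nat.factorial q : ℝ) ^ 2 * (Nat.factorial (n - q) : ℝ) ^ 2)

open Complex Finset

/-- A n = (2n)! / (4^n n!) = (1/2)(3/2)···((2n-1)/2) -/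
def ccA (n : ℕ) : ℝ := (Nat.factorial (2*n) : ℝ) / (4^n * (Nat.factorial n : ℝ))

/-- c n = (2n)! / (4^n (n!)^2), coefficient of binomial series for (1-x)^{-1/2} -/
def ccC (n : ℕ) : ℝ := (Nat.factorial (2*n) : ℝ) / (4^n * (Nat.factorial n : ℝ)^2)

lemma ccA_zero : ccA 0 = 1 := by simp [ccA]

lemma ccA_succ (n : ℕ) : ccA (n+1) = ccA n * ((n : ℝ) + 1/2) := by
  have key : (Nat.factorial (2*(n+1)) : ℝ) = (2*(n:ℝ)+2) * ((2*(n:ℝ)+1) * (Nat.factorial (2*n) : ℝ)) := by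
    rw [show 2*(n+1) = (2*n+1)+1 by ring, Nat.factorial_succ, Nat.factorial_succ]
    push_cast; ring
  have keyn : (Nat.factorial (n+1) : ℝ) = ((n:ℝ)+1) * (Nat.factorial n : ℝ) := by
    rw [Nat.factorial_succ]; push_cast; ring
  have h2 : (Nat.factorial (2*n) : ℝ) ≠ 0 := Nat.cast_ne_zero.mpr (Nat.factorial_ne_zero _)
  have h3 : (Nat.factorial n : ℝ) ≠ 0 := Nat.cast_ne_zero.mpr (Nat.factorial_ne_zero _)
  have h4 : (4:ℝ)^n ≠ 0 := by positivity
  have h5 : (n:ℝ) + 1 ≠ 0 := by positivity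
  rw [ccA, ccA, key, keyn, pow_succ]
  field_simp
  ring

lemma ccC_eq (n : ℕ) : ccC n = ccA n / (Nat.factorial n : ℝ) := by
  rw [ccC, ccA]; ring

lemma ccA_nonneg (n : ℕ) : 0 ≤ ccA n := by
  rw [ccA]; positivity

lemma ccC_nonneg (n : ℕ) : 0 ≤ ccC n := by
  rw [ccC]; positivity

lemma ccC_le_one (n : ℕ) : ccC n ≤ 1 := by
  induction n with
  | zero => simp [ccC]
  | succ n ih =>
    have h : ccC (n+1) = ccC n * (((n:ℝ) + 1/2) / ((n:ℝ)+1)) := by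
      have keyn : (Nat.factorial (n+1) : ℝ) = ((n:ℝ)+1) * (Nat.factorial n : ℝ) := by
        rw [Nat.factorial_succ]; push_cast; ring
      have h3 : (Nat.factorial n : ℝ) ≠ 0 := Nat.cast_ne_zero.mpr (Nat.factorial_ne_zero _)
      have h5 : (n:ℝ) + 1 ≠ 0 := by positivity
      rw [ccC_eq, ccC_eq, ccA_succ, keyn, div_mul_div_comm, mul_comm ((n:ℝ)+1)]
    rw [h]
    have h1 : ((n:ℝ) + 1/2) / ((n:ℝ)+1) ≤ 1 := by
      rw [div_le_one (by positivity)]; linarith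
    calc ccC n * (((n:ℝ) + 1/2) / ((n:ℝ)+1)) ≤ 1 * 1 :=
          mul_le_mul ih h1 (by positivity) zero_le_one
      _ = 1 := one_mul 1

lemma Ftil_eq {q n : ℕ} (h : q ≤ n) : Ftil q n = ccC q * ccC (n - q) := by
  rw [Ftil, ccC, ccC]
  have h1 : 2*n - 2*q = 2*(n-q) := by omega
  have h2 : (2:ℝ)^(2*n) = 4^q * 4^(n-q) := by
    rw [show (4:ℝ) = 2^2 by norm_num, ← pow_mul, ← pow_mul, ← pow_add]
    congr 1; omega
  rw [h1, h2]
  ring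

lemma one_sub_mem_slitPlane {z : ℂ} (hz : ‖z‖ < 1) : (1 - z) ∈ Complex.slitPlane := by
  rw [Complex.mem_slitPlane_iff]
  left
  have := Complex.re_le_norm z
  simp only [Complex.sub_re, Complex.one_re]
  linarith

lemma one_sub_ne_zero {z : ℂ} (hz : ‖z‖ < 1) : (1 - z) ≠ 0 :=
  Complex.slitPlane_ne_zero (one_sub_mem_slitPlane hz)

lemma iter_deriv_cpow (n : ℕ) : ∀ z : ℂ, ‖z‖ < 1 →
    iteratedDeriv n (fun w : ℂ => (1 - w) ^ (-(1/2) : ℂ)) z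
      = (ccA n : ℝ) * (1 - z) ^ (-(1/2 : ℂ) - n) := by
  induction n with
  | zero =>
    intro z hz
    simp [ccA_zero, iteratedDeriv_zero]
  | succ n ih =>
    intro z hz
    rw [iteratedDeriv_succ]
    have hev : (fun w => iteratedDeriv n (fun w : ℂ => (1 - w) ^ (-(1/2) : ℂ)) w)
        =ᶠ[nhds z] fun w => (ccA n : ℝ) * (1 - w) ^ (-(1/2 : ℂ) - n) := by
      filter_upwards [Metric.isOpen_ball.mem_nhds (mem_ball_zero_iff.mpr hz)] with w hw
      exact ih w (mem_ball_zero_iff.mp hw)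
    rw [hev.deriv_eq]
    have h1 : HasDerivAt (fun w : ℂ => 1 - w) (-1) z := (hasDerivAt_id z).const_sub 1
    have h2 : HasDerivAt (fun w : ℂ => (1 - w) ^ (-(1/2 : ℂ) - n))
        ((-(1/2 : ℂ) - n) * (1 - z) ^ (-(1/2 : ℂ) - n - 1) * (-1)) z :=
      h1.cpow_const (one_sub_mem_slitPlane hz)
    rw [(h2.const_mul ((ccA n : ℝ) : ℂ)).deriv]
    have hA : ((ccA (n+1) : ℝ) : ℂ) = (ccA n : ℝ) * ((n : ℂ) + 1/2) := by
      rw [ccA_succ]; push_cast; ring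
    have hexp : (-(1/2 : ℂ) - n - 1) = (-(1/2 : ℂ) - (n+1 : ℕ)) := by push_cast; ring
    rw [hexp, hA]
    ring

lemma hasSum_binom {x : ℂ} (hx : ‖x‖ < 1) :
    HasSum (fun n : ℕ => ((ccC n : ℝ) : ℂ) * x ^ n) ((1 - x) ^ (-(1/2) : ℂ)) := by
  have hd : DifferentiableOn ℂ (fun w : ℂ => (1 - w) ^ (-(1/2) : ℂ)) (Metric.ball 0 1) := by
    intro z hz
    refine DifferentiableAt.differentiableWithinAt ?_
    exact ((differentiableAt_const (1:ℂ)).sub differentiableAt_id).cpow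
      (differentiableAt_const _) (one_sub_mem_slitPlane (mem_ball_zero_iff.mp hz))
  have H := Complex.hasSum_taylorSeries_on_ball hd (mem_ball_zero_iff.mpr hx)
  refine H.congr_fun fun n => ?_
  rw [iter_deriv_cpow n 0 (by simp), sub_zero, sub_zero, one_cpow]
  have : ((ccC n : ℝ) : ℂ) = ((Nat.factorial n : ℂ))⁻¹ * (ccA n : ℝ) := by
    rw [ccC_eq]; push_cast; ring
  rw [this]
  simp [smul_eq_mul]
  ring

/-- (1 + r² - 2r cos θ)^{-1/2}
= ∑_{n=0}^∞ (∑_{q=0}^n F̃_{q,n} cos((n-2q)θ)) r^n for r ∈ [0,1). -/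
theorem generating_function_trig_expansion (r : ℝ) (hr : r ∈ Set.Ico (0:ℝ) 1) (θ : ℝ) :
    Summable (fun n : ℕ =>
      |(∑ q ∈ Finset.range (n + 1), Ftil q n * Real.cos (((n : ℝ) - 2 * q) * θ)) * r ^ n|) ∧
    (Real.sqrt (1 + r ^ 2 - 2 * r * Real.cos θ))⁻¹ =
      ∑' n : ℕ,
        (∑ q ∈ Finset.range (n + 1), Ftil q n * Real.cos (((n : ℝ) - 2 * q) * θ)) * r ^ n := by

  obtain ⟨hr0, hr1⟩ := hr
  set D : ℝ := 1 + r ^ 2 - 2 * r * Real.cos θ with hD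
  set z : ℂ := (r : ℂ) * Complex.exp ((θ : ℂ) * Complex.I) with hzdef
  have hzn : ‖z‖ = r := by
    rw [hzdef, norm_mul, Complex.norm_exp, Complex.norm_real, Real.norm_eq_abs,
      _root_.abs_of_nonneg hr0]
    simp
  have hz1 : ‖z‖ < 1 := by rw [hzn]; exact hr1
  have hcz1 : ‖(starRingEnd ℂ) z‖ < 1 := by rwa [RCLike.norm_conj]
  have h1 := hasSum_binom hz1
  have h2 := hasSum_binom hcz1
  have hnorm : ∀ (w : ℂ), ‖w‖ < 1 → Summable (fun n : ℕ => ‖((ccC n : ℝ) : ℂ) * w ^ n‖) := by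
    intro w hw
    refine Summable.of_nonneg_of_le (fun n => norm_nonneg _) (fun n => ?_)
      (summable_geometric_of_lt_one (norm_nonneg w) hw)
    rw [norm_mul, norm_pow, Complex.norm_real, Real.norm_eq_abs, _root_.abs_of_nonneg (ccC_nonneg n)]
    calc ccC n * ‖w‖ ^ n ≤ 1 * ‖w‖ ^ n := by
          apply mul_le_mul_of_nonneg_right (ccC_le_one n) (by positivity)
      _ = ‖w‖ ^ n := one_mul _
  have hprod := hasSum_sum_range_mul_of_summable_norm (hnorm z hz1)
    (hnorm _ hcz1)
  rw [h1.tsum_eq, h2.tsum_eq] at hprod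
  -- the value of the product
  have hD0 : 0 < D := by nlinarith [Real.cos_le_one θ]
  have habs : ‖1 - z‖ = Real.sqrt D := by
    rw [Complex.norm_def]
    congr 1
    rw [Complex.normSq_apply]
    simp only [Complex.sub_re, Complex.sub_im, Complex.one_re, Complex.one_im, hzdef,
      Complex.re_ofReal_mul, Complex.im_ofReal_mul, Complex.exp_ofReal_mul_I_re,
      Complex.exp_ofReal_mul_I_im, hD]
    nlinarith [Real.sin_sq_add_cos_sq θ]
  have hconj : (1 - (starRingEnd ℂ) z) ^ (-(1/2) : ℂ)
      = (starRingEnd ℂ) ((1 - z) ^ (-(1/2) : ℂ)) := by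
    have e : (1 - (starRingEnd ℂ) z) = (starRingEnd ℂ) (1 - z) := by rw [map_sub, map_one]
    rw [e, Complex.conj_cpow _ _ (Complex.slitPlane_arg_ne_pi (one_sub_mem_slitPlane hz1))]
    congr 1
    congr 1
    rw [Complex.conj_eq_iff_im]
    simp
  have hval : (1 - z) ^ (-(1/2) : ℂ) * (1 - (starRingEnd ℂ) z) ^ (-(1/2) : ℂ)
      = (((Real.sqrt D)⁻¹ : ℝ) : ℂ) := by
    rw [hconj, Complex.mul_conj]
    norm_cast
    rw [Complex.normSq_eq_norm_sq, Complex.norm_cpow_of_ne_zero (one_sub_ne_zero hz1)]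
    simp only [Complex.neg_re, Complex.neg_im, Complex.div_ofNat_re, Complex.div_ofNat_im,
      Complex.one_re, Complex.one_im]
    rw [show (1 - z).arg * -(0/2) = 0 by ring, Real.exp_zero, div_one,
      ← Real.rpow_natCast (‖1 - z‖ ^ (-(1/2) : ℝ)) 2,
      ← Real.rpow_mul (norm_nonneg _), habs,
      show ((-(1/2) : ℝ) * ((2:ℕ) : ℝ)) = -1 by push_cast; norm_num, Real.rpow_neg_one]
  rw [hval] at hprod
  have hre := hprod.mapL Complex.reCLM
  simp only [Complex.reCLM_apply, Complex.ofReal_re] at hre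
  -- identify the terms
  have hterm : ∀ n : ℕ,
      (∑ k ∈ Finset.range (n + 1),
        (((ccC k : ℝ) : ℂ) * z ^ k) * (((ccC (n - k) : ℝ) : ℂ) * ((starRingEnd ℂ) z) ^ (n - k))).re
      = (∑ q ∈ Finset.range (n + 1), Ftil q n * Real.cos (((n : ℝ) - 2 * q) * θ)) * r ^ n := by
    intro n
    rw [Complex.re_sum, Finset.sum_mul]
    refine Finset.sum_congr rfl fun k hk => ?_
    have hkn : k ≤ n := Nat.lt_succ_iff.mp (Finset.mem_range.mp hk)
    have hnk : ((n - k : ℕ) : ℝ) = (n : ℝ) - k := by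
      rw [Nat.cast_sub hkn]
    have e1 : z ^ k = ((r ^ k : ℝ) : ℂ) * Complex.exp ((((k : ℝ) * θ : ℝ) : ℂ) * Complex.I) := by
      rw [hzdef, mul_pow, ← Complex.exp_nat_mul]
      push_cast
      ring_nf
    have e2 : ((starRingEnd ℂ) z) ^ (n - k)
        = ((r ^ (n - k) : ℝ) : ℂ)
          * Complex.exp (((-(((n - k : ℕ) : ℝ)) * θ : ℝ) : ℂ) * Complex.I) := by
      rw [hzdef, map_mul, Complex.conj_ofReal, ← Complex.exp_conj, mul_pow,
        ← Complex.exp_nat_mul, map_mul, Complex.conj_ofReal, Complex.conj_I]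
      congr 1
      · push_cast; ring
      · congr 1; push_cast; ring
    rw [e1, e2]
    have e4 : Complex.exp ((((k : ℝ) * θ : ℝ) : ℂ) * Complex.I)
        * Complex.exp (((-(((n - k : ℕ) : ℝ)) * θ : ℝ) : ℂ) * Complex.I)
        = Complex.exp (((((k : ℝ) - ((n : ℝ) - k)) * θ : ℝ) : ℂ) * Complex.I) := by
      rw [← Complex.exp_add]
      congr 1
      push_cast [Nat.cast_sub hkn]
      ring
    have e3 : (((ccC k : ℝ) : ℂ) * (((r ^ k : ℝ) : ℂ) * Complex.exp ((((k : ℝ) * θ : ℝ) : ℂ) * Complex.I)))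
        * (((ccC (n - k) : ℝ) : ℂ) * (((r ^ (n - k) : ℝ) : ℂ)
          * Complex.exp (((-(((n - k : ℕ) : ℝ)) * θ : ℝ) : ℂ) * Complex.I)))
        = ((ccC k * ccC (n - k) * r ^ n : ℝ) : ℂ)
          * Complex.exp (((((k : ℝ) - ((n : ℝ) - k)) * θ : ℝ) : ℂ) * Complex.I) := by
      rw [show (((ccC k : ℝ) : ℂ) * (((r ^ k : ℝ) : ℂ) * Complex.exp ((((k : ℝ) * θ : ℝ) : ℂ) * Complex.I)))
        * (((ccC (n - k) : ℝ) : ℂ) * (((r ^ (n - k) : ℝ) : ℂ)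
          * Complex.exp (((-(((n - k : ℕ) : ℝ)) * θ : ℝ) : ℂ) * Complex.I)))
        = ((ccC k * r ^ k * (ccC (n - k) * r ^ (n - k)) : ℝ) : ℂ)
          * (Complex.exp ((((k : ℝ) * θ : ℝ) : ℂ) * Complex.I)
            * Complex.exp (((-(((n - k : ℕ) : ℝ)) * θ : ℝ) : ℂ) * Complex.I)) from by push_cast; ring,
        e4, show (ccC k * r ^ k * (ccC (n - k) * r ^ (n - k)) : ℝ)
          = ccC k * ccC (n - k) * r ^ n from by rw [mul_mul_mul_comm, ← pow_add, Nat.add_sub_cancel' hkn]]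
    rw [e3, Complex.re_ofReal_mul, Complex.exp_ofReal_mul_I_re]
    rw [Ftil_eq hkn]
    have hcos : Real.cos (((k : ℝ) - ((n : ℝ) - k)) * θ) = Real.cos (((n : ℝ) - 2 * k) * θ) := by
      rw [show (((n : ℝ) - 2 * k) * θ) = -((((k : ℝ) - ((n : ℝ) - k)) * θ)) by ring, Real.cos_neg]
    rw [hcos]
    ring
  have hfinal : HasSum (fun n : ℕ =>
      (∑ q ∈ Finset.range (n + 1), Ftil q n * Real.cos (((n : ℝ) - 2 * q) * θ)) * r ^ n)
      ((Real.sqrt D)⁻¹) := by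
    exact hre.congr_fun fun n => (hterm n).symm
  constructor
  · refine Summable.of_nonneg_of_le (fun n => abs_nonneg _) (fun n => ?_)
      (((summable_pow_mul_geometric_of_norm_lt_one 1
        (by rwa [Real.norm_eq_abs, _root_.abs_of_nonneg hr0])).congr
          (fun n => by rw [pow_one])).add (summable_geometric_of_lt_one hr0 hr1))
    rw [abs_mul, _root_.abs_pow, _root_.abs_of_nonneg hr0]
    have hS : |∑ q ∈ Finset.range (n + 1), Ftil q n * Real.cos (((n : ℝ) - 2 * q) * θ)|
        ≤ (n : ℝ) + 1 := by
      calc |∑ q ∈ Finset.range (n + 1), Ftil q n * Real.cos (((n : ℝ) - 2 * q) * θ)|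
          ≤ ∑ q ∈ Finset.range (n + 1), |Ftil q n * Real.cos (((n : ℝ) - 2 * q) * θ)| :=
            Finset.abs_sum_le_sum_abs _ _
        _ ≤ ∑ q ∈ Finset.range (n + 1), 1 := by
            refine Finset.sum_le_sum fun q hq => ?_
            have hqn : q ≤ n := Nat.lt_succ_iff.mp (Finset.mem_range.mp hq)
            rw [abs_mul]
            have h1 : |Ftil q n| ≤ 1 := by
              rw [Ftil_eq hqn, _root_.abs_of_nonneg (mul_nonneg (ccC_nonneg _) (ccC_nonneg _))]
              calc ccC q * ccC (n - q) ≤ 1 * 1 :=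
                    mul_le_mul (ccC_le_one _) (ccC_le_one _) (ccC_nonneg _) zero_le_one
                _ = 1 := one_mul 1
            have h2 : |Real.cos (((n : ℝ) - 2 * q) * θ)| ≤ 1 := Real.abs_cos_le_one _
            calc |Ftil q n| * |Real.cos (((n : ℝ) - 2 * q) * θ)| ≤ 1 * 1 :=
                  mul_le_mul h1 h2 (abs_nonneg _) zero_le_one
              _ = 1 := one_mul 1
        _ = (n : ℝ) + 1 := by simp
    calc |∑ q ∈ Finset.range (n + 1), Ftil q n * Real.cos (((n : ℝ) - 2 * q) * θ)| * r ^ n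
        ≤ ((n : ℝ) + 1) * r ^ n := mul_le_mul_of_nonneg_right hS (by positivity)
      _ = (n : ℝ) * r ^ n + r ^ n := by ring
  · exact hfinal.tsum_eq.symm


end
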